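/- arXiv:2111.13865 — 2 statements merged into one kernel-verified Lean document; each statement's English description precedes it below -/
import Mathlib

section
/- Let P, Q be complex polynomials of the same degree n. Suppose |P(z)| ≤ |Q(z)| for all z ∈ S^1 and all n roots of Q (counted with multiplicity) lie on S^1. Then P is a scalar multiple of Q. -/
open Polynomial

lemma root_mult_le_aux (P Q : Polynomial ℂ) (hP : P ≠ 0) (hQ : Q ≠ 0)
    (hroots : ∀ z ∈ Q.roots, ‖z‖ = 1)
    (hbound : ∀ z : ℂ, ‖z‖ = 1 → ‖P.eval z‖ ≤ ‖Q.eval z‖)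
    (a : ℂ) : rootMultiplicity a Q ≤ rootMultiplicity a P := by
  by_cases ha : rootMultiplicity a Q = 0
  · omega
  have hmpos : 0 < rootMultiplicity a Q := Nat.pos_of_ne_zero ha
  have haQ : a ∈ Q.roots := by
    rw [mem_roots hQ]
    exact (rootMultiplicity_pos hQ).mp hmpos
  have habs : ‖a‖ = 1 := hroots a haQ
  set m := rootMultiplicity a Q with hm
  set k := rootMultiplicity a P with hk
  by_contra hlt
  push_neg at hlt
  set P₁ := P /ₘ (X - C a) ^ k with hP₁def
  set Q₁ := Q /ₘ (X - C a) ^ m with hQ₁def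
  have hP1 : (X - C a) ^ k * P₁ = P := pow_mul_divByMonic_rootMultiplicity_eq P a
  have hQ1 : (X - C a) ^ m * Q₁ = Q := pow_mul_divByMonic_rootMultiplicity_eq Q a
  have hP1a : P₁.eval a ≠ 0 := eval_divByMonic_pow_rootMultiplicity_ne_zero a hP
  set θ₀ := Complex.arg a with hθ₀
  have ha' : a = Complex.exp (θ₀ * Complex.I) := by
    conv_lhs => rw [← Complex.norm_mul_exp_arg_mul_I a]
    rw [habs]
    simp [hθ₀]
  set z : ℝ → ℂ := fun t => Complex.exp (((θ₀ + t : ℝ) : ℂ) * Complex.I) with hz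
  have hz1 : ∀ t, ‖z t‖ = 1 := fun t => Complex.norm_exp_ofReal_mul_I _
  have hzne : ∀ t ∈ Set.Ioo (0:ℝ) 1, z t ≠ a := by
    intro t ht h
    rw [ha', Complex.exp_eq_exp_iff_exists_int] at h
    obtain ⟨j, hj⟩ := h
    have hI : (Complex.I : ℂ) ≠ 0 := Complex.I_ne_zero
    have : ((t : ℂ)) = (j : ℂ) * (2 * Real.pi) := by
      have h2 : ((θ₀ : ℂ) + t) * Complex.I = ((θ₀ : ℂ) + (j : ℂ) * (2 * Real.pi)) * Complex.I := by
        push_cast at hj ⊢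
        rw [hj]; ring
      have h3 := mul_right_cancel₀ hI h2
      linear_combination h3
    have ht' : (t : ℝ) = (j : ℝ) * (2 * Real.pi) := by
      exact_mod_cast this
    have hpi : (2 : ℝ) < 2 * Real.pi := by
      nlinarith [Real.pi_gt_three]
    rcases le_or_gt j 0 with hj0 | hj0
    · have hjr : (j : ℝ) ≤ 0 := by exact_mod_cast hj0
      nlinarith [ht.1, Real.pi_gt_three]
    · have hjr : (1 : ℝ) ≤ (j : ℝ) := by exact_mod_cast hj0
      nlinarith [ht.2, Real.pi_gt_three]
  have hcontz : Continuous z := by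
    apply Complex.continuous_exp.comp
    fun_prop
  have hz0 : z 0 = a := by
    rw [hz]; simp [ha']
  have htend : Filter.Tendsto z (nhdsWithin 0 (Set.Ioi 0)) (nhds a) := by
    rw [← hz0]
    exact (hcontz.tendsto 0).mono_left nhdsWithin_le_nhds
  -- the comparison
  have hbnd : ∀ᶠ t in nhdsWithin 0 (Set.Ioi 0),
      ‖P₁.eval (z t)‖ ≤
        ‖z t - a‖ ^ (m - k) * ‖Q₁.eval (z t)‖ := by
    filter_upwards [Ioo_mem_nhdsGT_of_mem (by norm_num : (0:ℝ) ∈ Set.Ico (0:ℝ) 1)] with t ht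
    have hne := hzne t ht
    have hd : 0 < ‖z t - a‖ := norm_pos_iff.mpr (sub_ne_zero.mpr hne)
    have h1 := hbound (z t) (hz1 t)
    rw [← hP1, ← hQ1] at h1
    simp only [eval_mul, eval_pow, eval_sub, eval_X, eval_C, norm_mul, norm_pow] at h1
    have hmk : m = k + (m - k) := by omega
    rw [hmk, pow_add, mul_assoc] at h1
    exact le_of_mul_le_mul_left h1 (pow_pos hd k)
  have htendL : Filter.Tendsto (fun t => ‖P₁.eval (z t)‖)
      (nhdsWithin 0 (Set.Ioi 0)) (nhds (‖P₁.eval a‖)) := by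
    have := ((continuous_norm.comp (P₁.continuous.comp hcontz)).tendsto 0).mono_left
      (nhdsWithin_le_nhds (s := Set.Ioi (0:ℝ)))
    simpa [Function.comp_def, hz0] using this
  have htendR : Filter.Tendsto
      (fun t => ‖z t - a‖ ^ (m - k) * ‖Q₁.eval (z t)‖)
      (nhdsWithin 0 (Set.Ioi 0)) (nhds 0) := by
    have h1 : Filter.Tendsto (fun t => ‖z t - a‖ ^ (m - k))
        (nhdsWithin 0 (Set.Ioi 0)) (nhds 0) := by
      have : Filter.Tendsto (fun t => ‖z t - a‖) (nhdsWithin 0 (Set.Ioi 0)) (nhds 0) := by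
        have := (htend.sub_const a)
        have h2 : Filter.Tendsto (fun t => z t - a) (nhdsWithin 0 (Set.Ioi 0)) (nhds 0) := by
          simpa using this
        simpa [Function.comp_def] using (continuous_norm.tendsto 0).comp h2
      have hmk : m - k ≠ 0 := by omega
      exact (this.pow (m - k)).congr' (by rfl) |>.trans_eq (by simp [zero_pow hmk])
    have h2 : Filter.Tendsto (fun t => ‖Q₁.eval (z t)‖)
        (nhdsWithin 0 (Set.Ioi 0)) (nhds (‖Q₁.eval a‖)) := by
      have := ((continuous_norm.comp (Q₁.continuous.comp hcontz)).tendsto 0).mono_left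
        (nhdsWithin_le_nhds (s := Set.Ioi (0:ℝ)))
      simpa [Function.comp_def, hz0] using this
    simpa using h1.mul h2
  have hfin : ‖P₁.eval a‖ ≤ 0 :=
    le_of_tendsto_of_tendsto htendL htendR hbnd
  have : 0 < ‖P₁.eval a‖ := norm_pos_iff.mpr hP1a
  linarith

/-- If `P` and `Q` are complex polynomials of the same degree `n`, `|P(z)| ≤ |Q(z)|`
on the unit circle, and all `n` roots of `Q` (with multiplicity) lie on the unit
circle, then `P` is a scalar multiple of `Q`. -/
theorem stmt1 (n : ℕ) (P Q : Polynomial ℂ) (hQ : Q ≠ 0)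
    (hdegP : P.natDegree = n) (hdegQ : Q.natDegree = n)
    (hroots : ∀ z ∈ Q.roots, ‖z‖ = 1)
    (hbound : ∀ z : ℂ, ‖z‖ = 1 → ‖P.eval z‖ ≤ ‖Q.eval z‖) :
    ∃ c : ℂ, P = C c * Q := by
  by_cases hP : P = 0
  · exact ⟨0, by simp [hP]⟩
  have key : Q.roots ≤ P.roots := by
    rw [Multiset.le_iff_count]
    intro a
    rw [count_roots, count_roots]
    exact root_mult_le_aux P Q hP hQ hroots hbound a
  have hsplit : Multiset.card Q.roots = Q.natDegree :=
    splits_iff_card_roots.mp (IsAlgClosed.splits Q)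
  set R := (Q.roots.map fun a => X - C a).prod with hR
  have hQeq : C Q.leadingCoeff * R = Q :=
    C_leadingCoeff_mul_prod_multiset_X_sub_C hsplit
  have hRdvdP : R ∣ P :=
    dvd_trans (Multiset.prod_dvd_prod_of_le (Multiset.map_le_map key)) P.prod_multiset_X_sub_C_dvd
  obtain ⟨S, hS⟩ := hRdvdP
  have hRmonic : R.Monic := monic_multiset_prod_of_monic _ _ (fun i _ => monic_X_sub_C i)
  have hRdeg : R.natDegree = n := by
    rw [hR, natDegree_multiset_prod_X_sub_C_eq_card, hsplit, hdegQ]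
  have hSne : S ≠ 0 := by
    intro h; rw [h, mul_zero] at hS; exact hP hS
  have hSdeg : S.natDegree = 0 := by
    have := hS ▸ hdegP
    rw [hRmonic.natDegree_mul' hSne, hRdeg] at this
    omega
  obtain ⟨s, hs⟩ : ∃ s, S = C s := ⟨S.coeff 0, eq_C_of_natDegree_eq_zero hSdeg⟩
  set lc := Q.leadingCoeff with hlcdef
  have hlc : lc ≠ 0 := leadingCoeff_ne_zero.mpr hQ
  refine ⟨s / lc, ?_⟩
  rw [hS, hs, ← hQeq, ← mul_assoc, ← C_mul, div_mul_cancel₀ _ hlc, mul_comm]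
end

section
/- Let P, Q be complex polynomials with |P(z)| ≤ |Q(z)| for all z ∈ S^1, and let λ ∈ S^1 be a root of Q of multiplicity m. Then λ is a root of P of multiplicity at least m. -/
open Polynomial Filter

/-- Limit lemma: a pointwise inequality on the circle minus a point extends to the point. -/
lemma circle_limit_le (f g : ℂ → ℝ) (hf : Continuous f) (hg : Continuous g)
    (μ : ℂ) (hμ : ‖μ‖ = 1)
    (h : ∀ z : ℂ, ‖z‖ = 1 → z ≠ μ → f z ≤ g z) : f μ ≤ g μ := by
  set u : ℕ → ℂ := fun n => μ * Complex.exp ((1 / (n + 1) : ℝ) * Complex.I) with hu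
  have hμ0 : μ ≠ 0 := by
    intro h0; rw [h0] at hμ; simp at hμ
  have htpos : ∀ n : ℕ, (0 : ℝ) < 1 / (n + 1) := by
    intro n; positivity
  have habs : ∀ n, ‖u n‖ = 1 := by
    intro n
    show ‖μ * Complex.exp ((1 / (n + 1) : ℝ) * Complex.I)‖ = 1
    rw [norm_mul, hμ, Complex.norm_exp_ofReal_mul_I, one_mul]
  have hne : ∀ n, u n ≠ μ := by
    intro n h_eq
    have he1 : Complex.exp ((1 / (n + 1) : ℝ) * Complex.I) = 1 := by
      have : μ * Complex.exp ((1 / (n + 1) : ℝ) * Complex.I) = μ * 1 := by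
        simpa [hu] using h_eq
      exact mul_left_cancel₀ hμ0 this
    have him : Real.sin (1 / (n + 1)) = 0 := by
      have h2 := congrArg Complex.im he1
      rwa [Complex.exp_ofReal_mul_I_im, Complex.one_im] at h2
    have hlt : (1 / (n + 1) : ℝ) < Real.pi := by
      have h1 : (1 / (n + 1) : ℝ) ≤ 1 := by
        rw [div_le_one (by positivity)]; linarith [Nat.cast_nonneg (α := ℝ) n]
      linarith [Real.pi_gt_three]
    have := Real.sin_pos_of_pos_of_lt_pi (htpos n) hlt
    linarith
  have ht : Tendsto (fun n : ℕ => (1 / (n + 1) : ℝ)) atTop (nhds 0) :=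
    tendsto_one_div_add_atTop_nhds_zero_nat
  have hzt : Tendsto u atTop (nhds μ) := by
    have h1 : Tendsto (fun n : ℕ => ((1 / (n + 1) : ℝ) : ℂ) * Complex.I) atTop (nhds 0) := by
      have := ((Complex.continuous_ofReal.tendsto 0).comp ht).mul_const Complex.I
      simpa using this
    have h2 := (Complex.continuous_exp.tendsto 0).comp h1
    have h3 : Tendsto (fun n : ℕ => Complex.exp (((1 / (n + 1) : ℝ) : ℂ) * Complex.I))
        atTop (nhds 1) := by simpa [Complex.exp_zero, Function.comp_def] using h2
    have := tendsto_const_nhds (x := μ) (f := atTop (α := ℕ)) |>.mul h3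
    simpa [hu] using this
  exact le_of_tendsto_of_tendsto' ((hf.tendsto μ).comp hzt) ((hg.tendsto μ).comp hzt)
    (fun n => h (u n) (habs n) (hne n))

/-- If `|P(z)| ≤ |Q(z)|` on the unit circle and `μ` on the unit circle is a root of `Q`
of multiplicity (at least) `m`, then `μ` is a root of `P` of multiplicity at least `m`. -/
theorem stmt2 (P Q : Polynomial ℂ)
    (hbound : ∀ z : ℂ, ‖z‖ = 1 → ‖P.eval z‖ ≤ ‖Q.eval z‖)
    (μ : ℂ) (hμ : ‖μ‖ = 1) (m : ℕ) (hm : (X - C μ) ^ m ∣ Q) :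
    (X - C μ) ^ m ∣ P := by
  induction m generalizing P Q with
  | zero => rw [pow_zero]; exact one_dvd P
  | succ m ih =>
    have hXμ : (X - C μ : Polynomial ℂ) ≠ 0 := X_sub_C_ne_zero μ
    obtain ⟨Q₁, hQ₁⟩ : (X - C μ) ∣ Q :=
      dvd_trans (dvd_pow_self _ (Nat.succ_ne_zero m)) hm
    have hQμ : Q.eval μ = 0 := by rw [hQ₁]; simp
    have hPμ : P.eval μ = 0 := by
      have h1 := hbound μ hμ
      rw [hQμ] at h1
      simp only [norm_zero] at h1
      exact norm_eq_zero.mp (le_antisymm h1 (norm_nonneg _))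
    obtain ⟨P₁, hP₁⟩ : (X - C μ) ∣ P := dvd_iff_isRoot.mpr hPμ
    have hQ₁div : (X - C μ) ^ m ∣ Q₁ := by
      have h : (X - C μ) * (X - C μ) ^ m ∣ (X - C μ) * Q₁ := by
        rw [← pow_succ', ← hQ₁]; exact hm
      exact (mul_dvd_mul_iff_left hXμ).mp h
    have hb' : ∀ z : ℂ, ‖z‖ = 1 → z ≠ μ →
        ‖P₁.eval z‖ ≤ ‖Q₁.eval z‖ := by
      intro z hz hzμ
      have h1 := hbound z hz
      rw [hP₁, hQ₁] at h1
      simp only [eval_mul, eval_sub, eval_X, eval_C, norm_mul] at h1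
      have hpos : 0 < ‖z - μ‖ := by
        rw [norm_pos_iff]
        exact sub_ne_zero_of_ne hzμ
      exact le_of_mul_le_mul_left h1 hpos
    have hb : ∀ z : ℂ, ‖z‖ = 1 →
        ‖P₁.eval z‖ ≤ ‖Q₁.eval z‖ := by
      intro z hz
      by_cases hzμ : z = μ
      · subst hzμ
        exact circle_limit_le _ _
          (continuous_norm.comp (Polynomial.continuous P₁))
          (continuous_norm.comp (Polynomial.continuous Q₁)) z hz hb'
      · exact hb' z hz hzμ
    rw [hP₁, pow_succ']
    exact mul_dvd_mul_left _ (ih P₁ Q₁ hb hQ₁div)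
end
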